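/- Let q be a prime power and N, ℓ positive integers with N ≤ ℓ. Let G ∈ F_q^{N×ℓ} be a matrix of rank N whose columns p_1, …, p_ℓ are nonzero and span pairwise distinct one-dimensional subspaces P_1, …, P_ℓ of F_q^N, and let C_P ≤ F_q^ℓ be the row space of G. Then the number of (N−1)-dimensional subspaces (hyperplanes) H of F_q^N with p_i ∉ H for all i equals W_ℓ(C_P)/(q−1), where W_ℓ(C_P) is the number of vectors in C_P all of whose ℓ coordinates are nonzero. -/

import Mathlib

open Matrix Submodule LinearMap

section Aux
variable {N : ℕ} {F : Type} [Field F]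

/-- The functional `x ↦ ∑ i, c i * x i`. -/
noncomputable def phiAux (c : Fin N → F) : (Fin N → F) →ₗ[F] F where
  toFun x := ∑ i, c i * x i
  map_add' x y := by simp [mul_add, Finset.sum_add_distrib]
  map_smul' a x := by simp [Finset.mul_sum, mul_left_comm]

lemma phiAux_apply (c x : Fin N → F) : phiAux c x = ∑ i, c i * x i := rfl

lemma phiAux_single (c : Fin N → F) (i : Fin N) : phiAux c (Pi.single i 1) = c i := by
  classical
  simp [phiAux_apply, Pi.single_apply]

lemma phiAux_inj {c d : Fin N → F} (h : phiAux c = phiAux d) : c = d := by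
  funext i
  rw [← phiAux_single c i, ← phiAux_single d i, h]

lemma phiAux_zero : phiAux (0 : Fin N → F) = 0 := by
  refine LinearMap.ext fun x => ?_
  simp [phiAux_apply]

lemma phiAux_smul (a : F) (c : Fin N → F) : phiAux (a • c) = a • phiAux c := by
  refine LinearMap.ext fun x => ?_
  simp [phiAux_apply, Finset.mul_sum, mul_assoc]

lemma phiAux_surj (ψ : (Fin N → F) →ₗ[F] F) : ∃ c, phiAux c = ψ := by
  classical
  refine ⟨fun i => ψ (Pi.single i 1), ?_⟩
  refine LinearMap.ext fun x => ?_
  have hx : x = ∑ i, Pi.single i (x i) := by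
    rw [Finset.univ_sum_single]
  conv_rhs => rw [hx]
  rw [map_sum, phiAux_apply]
  refine Finset.sum_congr rfl fun i _ => ?_
  have h1 : Pi.single i (x i) = x i • (Pi.single i (1 : F) : Fin N → F) := by
    rw [← Pi.single_smul, smul_eq_mul, mul_one]
  rw [h1, LinearMap.map_smul, smul_eq_mul, mul_comm]

/-- Two functionals with the same kernel are proportional. -/
lemma phiAux_scalar {c d : Fin N → F} (hd : d ≠ 0)
    (hk : ker (phiAux d) = ker (phiAux c)) : ∃ a : F, c = a • d := by
  have hφ : phiAux d ≠ 0 := fun h => hd (phiAux_inj (h.trans phiAux_zero.symm))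
  obtain ⟨x, hx⟩ : ∃ x, phiAux d x ≠ 0 := by
    by_contra h
    push_neg at h
    exact hφ (LinearMap.ext fun v => by simp [h v])
  set b := phiAux d x with hb
  refine ⟨phiAux c x / b, ?_⟩
  have key : phiAux c = phiAux ((phiAux c x / b) • d) := by
    rw [phiAux_smul]
    refine LinearMap.ext fun v => ?_
    have hmem : v - (phiAux d v / b) • x ∈ ker (phiAux d) := by
      simp only [LinearMap.mem_ker, map_sub, LinearMap.map_smul, smul_eq_mul, ← hb]
      rw [div_mul_cancel₀ _ hx, sub_self]
    rw [hk] at hmem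
    simp only [LinearMap.mem_ker, map_sub, LinearMap.map_smul, smul_eq_mul,
      sub_eq_zero] at hmem
    rw [LinearMap.smul_apply, smul_eq_mul, hmem]
    field_simp
  exact phiAux_inj key

end Aux

theorem stmt16 (q N ℓ : ℕ) (F : Type) [Field F] [Fintype F] (hq : Fintype.card F = q)
    (hN : 0 < N) (hℓ : N ≤ ℓ) (G : Matrix (Fin N) (Fin ℓ) F) (hrank : G.rank = N)
    (hcol : ∀ j : Fin ℓ, (fun i => G i j) ≠ (0 : Fin N → F))
    (hdist : ∀ j j' : Fin ℓ, j ≠ j' →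
      Submodule.span F {(fun i => G i j : Fin N → F)} ≠
        Submodule.span F {(fun i => G i j' : Fin N → F)}) :
    (Nat.card {H : Submodule F (Fin N → F) //
        Module.finrank F H = N - 1 ∧ ∀ j : Fin ℓ, (fun i => G i j) ∉ H} : ℚ) =
      (Nat.card {x : Submodule.span F (Set.range fun i : Fin N => (G i : Fin ℓ → F)) //
          ∀ j : Fin ℓ, (x : Fin ℓ → F) j ≠ 0} : ℚ) / ((q : ℚ) - 1) := by
  classical
  have j0 : Fin ℓ := ⟨0, lt_of_lt_of_le hN hℓ⟩
  set S1 := {H : Submodule F (Fin N → F) //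
      Module.finrank F H = N - 1 ∧ ∀ j : Fin ℓ, (fun i => G i j) ∉ H} with hS1
  set S2 := {c : Fin N → F // ∀ j : Fin ℓ, phiAux c (fun i => G i j) ≠ 0} with hS2
  have hfinrank_pi : Module.finrank F (Fin N → F) = N := by
    simp [Module.finrank_pi]
  -- S2 ≃ S3
  have hrows : LinearIndependent F (fun i : Fin N => G i) := by
    rw [linearIndependent_iff_card_eq_finrank_span]
    rw [Set.finrank, show (Set.range fun i : Fin N => G i) = Set.range G.row from rfl,
      ← Matrix.rank_eq_finrank_span_row, hrank, Fintype.card_fin]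
  have hvecinj : Function.Injective G.vecMul := Matrix.vecMul_injective_iff.mpr hrows
  have hvm : ∀ (c : Fin N → F) (j : Fin ℓ), (c ᵥ* G) j = phiAux c (fun i => G i j) := by
    intro c j
    simp [Matrix.vecMul, dotProduct, phiAux_apply]
  have hmemspan : ∀ c : Fin N → F,
      c ᵥ* G ∈ Submodule.span F (Set.range fun i : Fin N => (G i : Fin ℓ → F)) := by
    intro c
    have h1 : c ᵥ* G ∈ LinearMap.range G.vecMulLinear := ⟨c, rfl⟩
    rwa [range_vecMulLinear] at h1
  have e23 : S2 ≃ {x : Submodule.span F (Set.range fun i : Fin N => (G i : Fin ℓ → F)) //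
      ∀ j : Fin ℓ, (x : Fin ℓ → F) j ≠ 0} := by
    refine Equiv.ofBijective
      (fun c => ⟨⟨c.1 ᵥ* G, hmemspan c.1⟩, fun j =>
        show (c.1 ᵥ* G) j ≠ 0 by rw [hvm]; exact c.2 j⟩) ⟨?_, ?_⟩
    · intro c c' h
      have hval : c.1 ᵥ* G = c'.1 ᵥ* G :=
        congrArg (fun y => ((y : Submodule.span F (Set.range fun i : Fin N =>
          (G i : Fin ℓ → F))) : Fin ℓ → F)) (congrArg Subtype.val h)
      exact Subtype.ext (hvecinj hval)
    · rintro ⟨⟨x, hx⟩, hxnz⟩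
      have hx' := hx
      rw [show (Set.range fun i : Fin N => (G i : Fin ℓ → F)) = Set.range G.row from rfl,
        ← range_vecMulLinear] at hx'
      obtain ⟨c, hc⟩ := hx'
      have hc' : c ᵥ* G = x := hc
      refine ⟨⟨c, fun j => ?_⟩, ?_⟩
      · rw [← hvm, hc']
        exact hxnz j
      · exact Subtype.ext (Subtype.ext hc')
  -- each H in S1 has a representative functional
  have hrep : ∀ H : S1, ∃ c : Fin N → F, c ≠ 0 ∧ ker (phiAux c) = H.1 := by
    rintro ⟨H, hHrk, hHav⟩
    have hfin : Module.finrank F ((Fin N → F) ⧸ H) = 1 := by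
      have h2 := H.finrank_quotient_add_finrank
      rw [hfinrank_pi, hHrk] at h2
      omega
    obtain ⟨e⟩ : Nonempty (((Fin N → F) ⧸ H) ≃ₗ[F] F) :=
      FiniteDimensional.nonempty_linearEquiv_of_finrank_eq
        (by rw [hfin, Module.finrank_self])
    obtain ⟨c, hc⟩ := phiAux_surj ((e : ((Fin N → F) ⧸ H) →ₗ[F] F) ∘ₗ H.mkQ)
    have hker : ker (phiAux c) = H := by
      rw [hc, LinearMap.ker_comp, LinearEquiv.ker, Submodule.comap_bot, Submodule.ker_mkQ]
    refine ⟨c, ?_, hker⟩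
    intro h0
    rw [h0, phiAux_zero] at hker
    have htop : H = ⊤ := by rw [← hker]; exact LinearMap.ker_zero
    rw [htop, finrank_top, hfinrank_pi] at hHrk
    omega
  choose rep hrep0 hrepker using hrep
  -- S1 × Fˣ ≃ S2
  have e12 : S1 × Fˣ ≃ S2 := by
    refine Equiv.ofBijective (fun p => ⟨(p.2 : F) • rep p.1, fun j => ?_⟩) ⟨?_, ?_⟩
    · rw [phiAux_smul, LinearMap.smul_apply, smul_eq_mul]
      refine mul_ne_zero (Units.ne_zero p.2) ?_
      have h3 := p.1.2.2 j
      rw [← hrepker p.1] at h3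
      exact fun h => h3 h
    · rintro ⟨H, u⟩ ⟨H', u'⟩ h
      have hval : (u : F) • rep H = (u' : F) • rep H' := congrArg Subtype.val h
      have hkeq : ker (phiAux ((u : F) • rep H)) = ker (phiAux ((u' : F) • rep H')) := by
        rw [hval]
      rw [phiAux_smul, phiAux_smul, LinearMap.ker_smul _ _ (Units.ne_zero u),
        LinearMap.ker_smul _ _ (Units.ne_zero u'), hrepker, hrepker] at hkeq
      have hHeq : H = H' := Subtype.ext hkeq
      subst hHeq
      obtain ⟨i, hi⟩ := Function.ne_iff.mp (hrep0 H)
      have h4 : (u : F) * rep H i = (u' : F) * rep H i := congrFun hval i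
      have hu : (u : F) = (u' : F) := mul_right_cancel₀ hi h4
      exact Prod.ext rfl (Units.ext hu)
    · rintro ⟨c, hc⟩
      have hc0 : c ≠ 0 := by
        intro h0
        exact hc j0 (by rw [h0, phiAux_zero]; rfl)
      have hφ0 : phiAux c ≠ 0 := fun h => hc0 (phiAux_inj (h.trans phiAux_zero.symm))
      have hrange : LinearMap.range (phiAux c) = ⊤ := by
        rw [LinearMap.range_eq_top]
        intro y
        refine ⟨(y / phiAux c (fun i => G i j0)) • (fun i => G i j0), ?_⟩
        rw [LinearMap.map_smul, smul_eq_mul, div_mul_cancel₀ _ (hc j0)]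
      have hkrk : Module.finrank F (ker (phiAux c)) = N - 1 := by
        have h1 := LinearMap.finrank_range_add_finrank_ker (phiAux c)
        rw [hrange, finrank_top, Module.finrank_self, hfinrank_pi] at h1
        omega
      set H : S1 := ⟨ker (phiAux c), hkrk, fun j hj => hc j hj⟩ with hHdef
      have hkk : ker (phiAux (rep H)) = ker (phiAux c) := hrepker H
      obtain ⟨a, ha⟩ := phiAux_scalar (hrep0 H) hkk
      have ha0 : a ≠ 0 := by
        intro h0
        rw [h0, zero_smul] at ha
        exact hc0 ha
      refine ⟨⟨H, Units.mk0 a ha0⟩, Subtype.ext ?_⟩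
      exact ha.symm
  -- counting
  have hcount : Nat.card {x : Submodule.span F (Set.range fun i : Fin N => (G i : Fin ℓ → F)) //
      ∀ j : Fin ℓ, (x : Fin ℓ → F) j ≠ 0} = Nat.card S1 * (q - 1) := by
    rw [← Nat.card_congr e23, ← Nat.card_congr e12, Nat.card_prod]
    congr 1
    rw [Nat.card_eq_fintype_card, Fintype.card_units, hq]
  rw [hcount]
  have hq2 : 2 ≤ q := by rw [← hq]; exact Fintype.one_lt_card
  have hne : (q : ℚ) - 1 ≠ 0 := by
    have h5 : (2 : ℚ) ≤ (q : ℚ) := by exact_mod_cast hq2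
    linarith
  rw [eq_div_iff hne]
  push_cast [Nat.cast_sub (by omega : 1 ≤ q)]
  ring
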